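/- Let n, p, s be natural numbers with 1 ≤ 2p + s and 2p + s ≤ n. Then the family H^{(p,s)}(n) has the Erdős–Ko–Rado property: for every intersecting family F ⊆ H^{(p,s)}(n), the cardinality of F is at most the number of members of H^{(p,s)}(n) containing the fixed vertex (0, false). -/

import Mathlib

/-- The family `H^{(p,s)}(n)`: subsets of `V(M_n) = Fin n × Bool` of cardinality `2p+s`
spanning exactly `p` edges of the perfect matching `M_n`
(whose `i`-th edge joins `(i, false)` and `(i, true)`). -/
def matchFamily (n p s : ℕ) : Finset (Finset (Fin n × Bool)) :=
  Finset.univ.filter (fun H : Finset (Fin n × Bool) =>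
    H.card = 2 * p + s ∧
    (Finset.univ.filter (fun i : Fin n => (i, false) ∈ H ∧ (i, true) ∈ H)).card = p)
/-- A family of finsets is intersecting if any two of its members intersect. -/
def IsIntersecting {α : Type*} [DecidableEq α] (F : Finset (Finset α)) : Prop :=
  ∀ A ∈ F, ∀ B ∈ F, (A ∩ B).Nonempty

namespace MFaux

open Finset

abbrev Vt (n : ℕ) := Fin n × Bool

def flipP {n : ℕ} : Vt n → Vt n := fun v => (v.1, !v.2)

/-- automorphisms of the matching -/
def Gs (n : ℕ) : Finset (Equiv.Perm (Vt n)) :=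
  univ.filter (fun e => ∀ v, e (flipP v) = flipP (e v))

/-- the odd chord length -/
def dd (s : ℕ) : ℕ := if Even s then s + 1 else s

/-- embedding of vertices on the cycle `ZMod (2n)` -/
def fV (n s : ℕ) : Vt n → ZMod (2*n) :=
  fun v => ((2 * v.1.val + if v.2 then dd s else 0 : ℕ) : ZMod (2*n))

/-- the window starting at `a` -/
def Wnd (n p s : ℕ) (a : ZMod (2*n)) : Finset (Vt n) :=
  univ.filter (fun v => (fV n s v - a).val < 2*p+s)

/-- admissible window starting points -/
def A0 (n s : ℕ) : Finset (ZMod (2*n)) :=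
  ((Finset.range (2*n)).image (fun t : ℕ => (t : ZMod (2*n)))).filter
    (fun a => Even s → Even a.val)

lemma mem_A0 {n s : ℕ} (hn : n ≠ 0) {a : ZMod (2*n)} :
    a ∈ A0 n s ↔ (Even s → Even a.val) := by
  haveI : NeZero (2*n) := ⟨by omega⟩
  simp only [A0, mem_filter, mem_image, mem_range, and_iff_right_iff_imp]
  intro _
  exact ⟨a.val, a.val_lt, by simp [ZMod.natCast_val, ZMod.cast_id]⟩

/-- number of admissible windows through a point -/
def mm (p s : ℕ) : ℕ := if Even s then p + s/2 else 2*p+s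

def stab (n p s : ℕ) (a : ZMod (2*n)) : ℕ :=
  ((Gs n).filter (fun e => (Wnd n p s a).map e.toEmbedding = Wnd n p s a)).card

variable {n p s : ℕ}

lemma refl_mem_Gs : Equiv.refl (Vt n) ∈ Gs n := by
  simp [Gs]

lemma symm_mem_Gs {e : Equiv.Perm (Vt n)} (he : e ∈ Gs n) : e.symm ∈ Gs n := by
  simp only [Gs, mem_filter, mem_univ, true_and] at he ⊢
  intro v
  have h := he (e.symm v)
  have : e.symm (e (flipP (e.symm v))) = e.symm (flipP v) := by rw [h, Equiv.apply_symm_apply]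
  rw [Equiv.symm_apply_apply] at this
  exact this.symm

lemma trans_mem_Gs {e f : Equiv.Perm (Vt n)} (he : e ∈ Gs n) (hf : f ∈ Gs n) :
    e.trans f ∈ Gs n := by
  simp only [Gs, mem_filter, mem_univ, true_and] at he hf ⊢
  intro v
  simp [Equiv.trans_apply, he v, hf (e v)]

lemma mem_matchFamily_iff {H : Finset (Vt n)} :
    H ∈ matchFamily n p s ↔ H.card = 2*p+s ∧
      (univ.filter (fun i : Fin n => (i, false) ∈ H ∧ (i, true) ∈ H)).card = p := by
  simp [matchFamily]

lemma mem_map_equiv' {H : Finset (Vt n)} {e : Equiv.Perm (Vt n)} {v : Vt n} :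
    v ∈ H.map e.toEmbedding ↔ e.symm v ∈ H := Finset.mem_map_equiv

/-- closure: matching automorphisms preserve the family -/
lemma map_mem_matchFamily {e : Equiv.Perm (Vt n)} (he : e ∈ Gs n) {H : Finset (Vt n)}
    (hH : H ∈ matchFamily n p s) : H.map e.toEmbedding ∈ matchFamily n p s := by
  rw [mem_matchFamily_iff] at hH ⊢
  obtain ⟨hcard, hedge⟩ := hH
  refine ⟨by rw [Finset.card_map, hcard], ?_⟩
  have hsymm := symm_mem_Gs he
  simp only [Gs, mem_filter, mem_univ, true_and] at hsymm
  set g : Fin n → Fin n := fun i => (e.symm (i, false)).1 with hg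
  have hflip : ∀ i : Fin n, e.symm (i, true) = flipP (e.symm (i, false)) := by
    intro i; exact hsymm (i, false)
  have hiff : ∀ i : Fin n,
      ((i, false) ∈ H.map e.toEmbedding ∧ (i, true) ∈ H.map e.toEmbedding) ↔
      ((g i, false) ∈ H ∧ (g i, true) ∈ H) := by
    intro i
    rw [mem_map_equiv', mem_map_equiv', hflip i]
    have hw : e.symm (i, false) = (g i, (e.symm (i, false)).2) := rfl
    rcases hb : (e.symm (i, false)).2 with _ | _
    · rw [hw, hb]; exact Iff.rfl
    · rw [hw, hb]
      constructor
      · rintro ⟨x, y⟩; exact ⟨y, x⟩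
      · rintro ⟨x, y⟩; exact ⟨y, x⟩
  have hginj : Function.Injective g := by
    intro i j hij
    have hwi : e.symm (i, false) = (g i, (e.symm (i, false)).2) := rfl
    have hwj : e.symm (j, false) = (g j, (e.symm (j, false)).2) := rfl
    by_cases hb : (e.symm (i, false)).2 = (e.symm (j, false)).2
    · have : e.symm (i, false) = e.symm (j, false) := by
        rw [hwi, hwj, hij, hb]
      have := e.symm.injective this
      exact (Prod.ext_iff.1 this).1
    · exfalso
      have h2 : e.symm (j, false) = flipP (e.symm (i, false)) := by
        rw [hwi, hwj, hij, flipP]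
        rcases hbi : (e.symm (i, false)).2 with _ | _ <;>
          rcases hbj : (e.symm (j, false)).2 with _ | _ <;>
            (revert hb; simp [hbi, hbj])
      rw [← hflip i] at h2
      have := e.symm.injective h2
      simp at this
  have hgbij : Function.Bijective g := Finite.injective_iff_bijective.1 hginj
  rw [← hedge]
  apply Finset.card_nbij (i := g)
  · intro i hi
    simp only [Finset.mem_coe, mem_filter, mem_univ, true_and] at hi ⊢
    exact (hiff i).1 hi
  · exact Set.injOn_of_injective hginj
  · intro j hj
    simp only [coe_filter, Set.mem_setOf_eq, mem_univ, true_and, Set.mem_image] at hj ⊢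
    obtain ⟨i, hi⟩ := hgbij.2 j
    exact ⟨i, (hiff i).2 (by rw [hi]; exact hj), hi⟩


def cls {n : ℕ} (H : Finset (Vt n)) : Fin n → Bool × Bool :=
  fun i => (decide ((i, false) ∈ H), decide ((i, true) ∈ H))

def fib {n : ℕ} (H : Finset (Vt n)) (c : Bool × Bool) : ℕ :=
  (univ.filter (fun i => cls H i = c)).card

lemma mem_of_cls_eq {n : ℕ} {H H' : Finset (Vt n)} {i j : Fin n}
    (h : cls H i = cls H' j) (b : Bool) : (i, b) ∈ H ↔ (j, b) ∈ H' := by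
  have h1 := congrArg Prod.fst h
  have h2 := congrArg Prod.snd h
  simp only [cls] at h1 h2
  cases b
  · exact decide_eq_decide.mp h1
  · exact decide_eq_decide.mp h2

lemma card_eq_two_fib {n : ℕ} (H : Finset (Vt n)) :
    H.card = 2 * fib H (true, true) + (fib H (true, false) + fib H (false, true)) := by
  classical
  set A := univ.filter (fun i : Fin n => (i, false) ∈ H) with hA
  set B := univ.filter (fun i : Fin n => (i, true) ∈ H) with hB
  have h1 : H.card = A.card + B.card := by
    have : H = univ.filter (· ∈ H) := by simp
    rw [this, Finset.card_filter, Fintype.sum_prod_type]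
    rw [hA, hB, Finset.card_filter, Finset.card_filter, ← Finset.sum_add_distrib]
    refine Finset.sum_congr rfl (fun i _ => ?_)
    rw [Fintype.sum_bool]
    ring
  have h2 : A.card = (A ∩ B).card + (A \ B).card :=
    (Finset.card_inter_add_card_sdiff A B).symm
  have h3 : B.card = (A ∩ B).card + (B \ A).card := by
    rw [Finset.inter_comm]
    exact (Finset.card_inter_add_card_sdiff B A).symm
  have e1 : fib H (true, true) = (A ∩ B).card := by
    unfold fib
    congr 1
    ext i
    simp [cls, Prod.ext_iff, hA, hB]
  have e2 : fib H (true, false) = (A \ B).card := by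
    unfold fib
    congr 1
    ext i
    simp [cls, Prod.ext_iff, hA, hB]
  have e3 : fib H (false, true) = (B \ A).card := by
    unfold fib
    congr 1
    ext i
    simp [cls, Prod.ext_iff, hA, hB, and_comm]
  omega

lemma fib_sum {n : ℕ} (H : Finset (Vt n)) :
    fib H (true, true) + fib H (true, false) + fib H (false, true) + fib H (false, false)
      = n := by
  classical
  have h := Finset.card_eq_sum_card_fiberwise
    (f := cls H) (s := (univ : Finset (Fin n))) (t := (univ : Finset (Bool × Bool)))
    (fun x _ => mem_univ _)
  rw [card_univ, Fintype.card_fin] at h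
  rw [Fintype.sum_prod_type] at h
  simp only [Fintype.sum_bool] at h
  unfold fib
  omega

/-- sign-flip automorphism -/
def fe {n : ℕ} (ε : Fin n → Bool) : Equiv.Perm (Vt n) where
  toFun v := (v.1, xor (ε v.1) v.2)
  invFun v := (v.1, xor (ε v.1) v.2)
  left_inv v := by cases v with | mk i b => simp
  right_inv v := by cases v with | mk i b => simp

lemma fe_apply {n : ℕ} (ε : Fin n → Bool) (i : Fin n) (b : Bool) :
    fe ε (i, b) = (i, xor (ε i) b) := rfl

lemma fe_symm_apply {n : ℕ} (ε : Fin n → Bool) (i : Fin n) (b : Bool) :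
    (fe ε).symm (i, b) = (i, xor (ε i) b) := rfl

lemma fe_mem_Gs {n : ℕ} (ε : Fin n → Bool) : fe ε ∈ Gs n := by
  simp only [Gs, mem_filter, mem_univ, true_and]
  rintro ⟨i, b⟩
  show fe ε (i, !b) = flipP (fe ε (i, b))
  rw [fe_apply, fe_apply]
  show (i, xor (ε i) !b) = (i, !(xor (ε i) b))
  cases ε i <;> cases b <;> rfl

lemma mem_map_fe {n : ℕ} {H : Finset (Vt n)} {ε : Fin n → Bool} {i : Fin n} {b : Bool} :
    (i, b) ∈ H.map (fe ε).toEmbedding ↔ (i, xor (ε i) b) ∈ H := by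
  rw [mem_map_equiv', fe_symm_apply]

lemma map_fe_map_fe {n : ℕ} (H : Finset (Vt n)) (ε : Fin n → Bool) :
    (H.map (fe ε).toEmbedding).map (fe ε).toEmbedding = H := by
  ext ⟨i, b⟩
  rw [mem_map_fe, mem_map_fe]
  cases ε i <;> cases b <;> rfl

/-- index-permutation automorphism -/
def pe {n : ℕ} (q : Equiv.Perm (Fin n)) : Equiv.Perm (Vt n) :=
  q.prodCongr (Equiv.refl Bool)

lemma pe_mem_Gs {n : ℕ} (q : Equiv.Perm (Fin n)) : pe q ∈ Gs n := by
  simp only [Gs, mem_filter, mem_univ, true_and]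
  rintro ⟨i, b⟩
  rfl

lemma mem_map_pe {n : ℕ} {H : Finset (Vt n)} {q : Equiv.Perm (Fin n)} {i : Fin n} {b : Bool} :
    (i, b) ∈ H.map (pe q).toEmbedding ↔ (q.symm i, b) ∈ H := by
  rw [mem_map_equiv']
  rfl

lemma map_trans {n : ℕ} (H : Finset (Vt n)) (a b : Equiv.Perm (Vt n)) :
    H.map (a.trans b).toEmbedding = (H.map a.toEmbedding).map b.toEmbedding := by
  ext v
  simp only [mem_map_equiv', Equiv.symm_trans_apply]

/-- normalizing sign flip for `H` -/
def epsH {n : ℕ} (H : Finset (Vt n)) : Fin n → Bool :=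
  fun i => decide ((i, true) ∈ H ∧ (i, false) ∉ H)

def nrm {n : ℕ} (H : Finset (Vt n)) : Finset (Vt n) := H.map (fe (epsH H)).toEmbedding

lemma nrm_no_ft {n : ℕ} (H : Finset (Vt n)) (i : Fin n) : cls (nrm H) i ≠ (false, true) := by
  intro hc
  have h1 := congrArg Prod.fst hc
  have h2 := congrArg Prod.snd hc
  simp only [cls, decide_eq_false_iff_not, decide_eq_true_eq] at h1 h2
  rw [show (false : Bool) = decide ((i, false) ∈ nrm H) from (congrArg Prod.fst hc).symm] at h1
  have hfmem : ¬ (i, false) ∈ nrm H := by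
    have := congrArg Prod.fst hc
    simpa [cls] using this
  have htmem : (i, true) ∈ nrm H := by
    have := congrArg Prod.snd hc
    simpa [cls] using this
  rw [nrm, mem_map_fe] at hfmem htmem
  by_cases hE : (i, true) ∈ H ∧ (i, false) ∉ H
  · have he : epsH H i = true := by simp [epsH, hE]
    rw [he] at hfmem htmem
    exact hfmem (by simpa using hE.1)
  · have he : epsH H i = false := by simp only [epsH, decide_eq_false_iff_not]; exact hE
    rw [he] at hfmem htmem
    simp only [Bool.false_xor] at hfmem htmem
    exact hE ⟨htmem, hfmem⟩

lemma nrm_tt_iff {n : ℕ} (H : Finset (Vt n)) (i : Fin n) :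
    cls (nrm H) i = (true, true) ↔ ((i, false) ∈ H ∧ (i, true) ∈ H) := by
  have hf : (i, false) ∈ nrm H ↔ (i, xor (epsH H i) false) ∈ H := mem_map_fe
  have ht : (i, true) ∈ nrm H ↔ (i, xor (epsH H i) true) ∈ H := mem_map_fe
  simp only [cls, Prod.ext_iff, decide_eq_true_eq]
  rw [hf, ht]
  cases h : epsH H i <;> simp [and_comm]

lemma nrm_card {n : ℕ} (H : Finset (Vt n)) : (nrm H).card = H.card := Finset.card_map _

lemma nrm_fib {n p s : ℕ} {H : Finset (Vt n)} (hH : H ∈ matchFamily n p s) :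
    fib (nrm H) (true, true) = p ∧ fib (nrm H) (true, false) = s ∧
    fib (nrm H) (false, true) = 0 ∧ fib (nrm H) (false, false) = n - (p + s) ∧ p + s ≤ n := by
  rw [mem_matchFamily_iff] at hH
  obtain ⟨hcard, hedge⟩ := hH
  have htt : fib (nrm H) (true, true) = p := by
    rw [← hedge]
    unfold fib
    congr 1
    ext i
    simp only [mem_filter, mem_univ, true_and]
    exact nrm_tt_iff H i
  have hft : fib (nrm H) (false, true) = 0 := by
    unfold fib
    rw [Finset.card_eq_zero, Finset.filter_eq_empty_iff]
    intro i _
    exact nrm_no_ft H i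
  have h2 := card_eq_two_fib (nrm H)
  rw [nrm_card, hcard, htt, hft] at h2
  have h3 := fib_sum (nrm H)
  rw [htt, hft] at h3
  refine ⟨htt, by omega, hft, by omega, by omega⟩

/-- transitivity of the automorphisms on the family -/
lemma trans_matchFamily {H₁ H₂ : Finset (Vt n)} (h₁ : H₁ ∈ matchFamily n p s)
    (h₂ : H₂ ∈ matchFamily n p s) : ∃ e ∈ Gs n, H₁.map e.toEmbedding = H₂ := by
  classical
  obtain ⟨tt1, tf1, ft1, ff1, hps1⟩ := nrm_fib h₁
  obtain ⟨tt2, tf2, ft2, ff2, _⟩ := nrm_fib h₂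
  have hfib : ∀ c : Bool × Bool, fib (nrm H₁) c = fib (nrm H₂) c := by
    rintro ⟨b1, b2⟩
    cases b1 <;> cases b2 <;> simp_all
  have hcards : ∀ c : Bool × Bool,
      Fintype.card {i // cls (nrm H₁) i = c} = Fintype.card {i // cls (nrm H₂) i = c} := by
    intro c
    rw [Fintype.card_subtype, Fintype.card_subtype]
    exact hfib c
  let q : Fin n ≃ Fin n :=
    Equiv.ofFiberEquiv (f := cls (nrm H₁)) (g := cls (nrm H₂))
      (fun c => Fintype.equivOfCardEq (hcards c))
  have hq : ∀ i, cls (nrm H₂) (q i) = cls (nrm H₁) i :=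
    fun i => Equiv.ofFiberEquiv_map _ i
  have hmapq : (nrm H₁).map (pe q).toEmbedding = nrm H₂ := by
    ext ⟨j, b⟩
    rw [mem_map_pe]
    have := hq (q.symm j)
    rw [Equiv.apply_symm_apply] at this
    exact mem_of_cls_eq this.symm b
  refine ⟨((fe (epsH H₁)).trans (pe q)).trans (fe (epsH H₂)), ?_, ?_⟩
  · exact trans_mem_Gs (trans_mem_Gs (fe_mem_Gs _) (pe_mem_Gs _)) (fe_mem_Gs _)
  · rw [map_trans, map_trans]
    show ((nrm H₁).map (pe q).toEmbedding).map (fe (epsH H₂)).toEmbedding = H₂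
    rw [hmapq]
    exact map_fe_map_fe H₂ (epsH H₂)


lemma count_parity (P t : ℕ) :
    ((range (2*P)).filter (fun x => Even (x + t))).card = P := by
  induction P with
  | zero => simp
  | succ P ih =>
    have h2 : 2 * (P + 1) = (2*P + 1) + 1 := by ring
    rw [h2, range_add_one, range_add_one, filter_insert, filter_insert]
    by_cases h : Even (2*P + t)
    · have h1 : ¬ Even ((2*P + 1) + t) := by
        rw [Nat.even_iff] at h ⊢; omega
      rw [if_neg h1, if_pos h, Finset.card_insert_of_notMem (by simp), ih]
    · have h1 : Even ((2*P + 1) + t) := by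
        rw [Nat.even_iff] at h ⊢; omega
      rw [if_pos h1, if_neg h, Finset.card_insert_of_notMem (by simp), ih]

lemma val_cast_parity (hn : n ≠ 0) (x : ℕ) :
    Even ((x : ZMod (2*n)).val) ↔ Even x := by
  haveI : NeZero (2*n) := ⟨by omega⟩
  rw [ZMod.val_natCast, Nat.even_iff, Nat.even_iff, Nat.mod_mod_of_dvd x ⟨n, rfl⟩]

lemma val_add_parity (hn : n ≠ 0) (b c : ZMod (2*n)) :
    Even ((b + c).val) ↔ Even (b.val + c.val) := by
  haveI : NeZero (2*n) := ⟨by omega⟩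
  rw [ZMod.val_add, Nat.even_iff, Nat.even_iff, Nat.mod_mod_of_dvd _ ⟨n, rfl⟩]

lemma cast_val_id (hn : n ≠ 0) (z : ZMod (2*n)) : ((z.val : ℕ) : ZMod (2*n)) = z := by
  haveI : NeZero (2*n) := ⟨by omega⟩
  rw [ZMod.natCast_val, ZMod.cast_id]

lemma dd_odd : ¬ Even (dd s) := by
  unfold dd
  split
  · rename_i h
    rw [Nat.even_iff] at h ⊢; omega
  · assumption

lemma dd_le : dd s ≤ s + 1 := by
  unfold dd
  split <;> omega

lemma fV_false (i : Fin n) : fV n s (i, false) = ((2 * i.val : ℕ) : ZMod (2*n)) := by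
  simp [fV]

lemma fV_true (i : Fin n) : fV n s (i, true) = ((2 * i.val + dd s : ℕ) : ZMod (2*n)) := by
  simp [fV]

lemma fV_injective (hn : n ≠ 0) : Function.Injective (fV n s) := by
  haveI : NeZero (2*n) := ⟨by omega⟩
  have hval : ∀ i : Fin n, ((2 * i.val : ℕ) : ZMod (2*n)).val = 2 * i.val := fun i =>
    ZMod.val_natCast_of_lt (by omega)
  have hpar : ∀ (i j : Fin n), ((2 * i.val : ℕ) : ZMod (2*n)) ≠ ((2 * j.val + dd s : ℕ) : ZMod (2*n)) := by
    intro i j hij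
    have he : Even ((( 2 * i.val : ℕ) : ZMod (2*n)).val) := by
      rw [val_cast_parity hn]; exact ⟨i.val, by ring⟩
    rw [hij, val_cast_parity hn] at he
    rcases he with ⟨w, hw⟩
    have hd := dd_odd (s := s)
    rw [Nat.even_iff] at hd
    omega
  have hcancel : ∀ (i j : Fin n), ((2 * i.val : ℕ) : ZMod (2*n)) = ((2 * j.val : ℕ) : ZMod (2*n)) → i = j := by
    intro i j hij
    have := congrArg ZMod.val hij
    rw [hval i, hval j] at this
    exact Fin.ext (by omega)
  rintro ⟨i, bi⟩ ⟨j, bj⟩ hij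
  cases bi <;> cases bj <;>
    simp only [fV_false, fV_true] at hij
  · rw [hcancel i j hij]
  · exact absurd hij (hpar i j)
  · exact absurd hij.symm (hpar j i)
  · have hc : ((2 * i.val : ℕ) : ZMod (2*n)) = ((2 * j.val : ℕ) : ZMod (2*n)) := by
      have h1 : ((2 * i.val + dd s : ℕ) : ZMod (2*n))
          = ((2 * i.val : ℕ) : ZMod (2*n)) + (dd s : ZMod (2*n)) := by push_cast; ring
      have h2 : ((2 * j.val + dd s : ℕ) : ZMod (2*n))
          = ((2 * j.val : ℕ) : ZMod (2*n)) + (dd s : ZMod (2*n)) := by push_cast; ring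
      rw [h1, h2] at hij
      exact add_right_cancel hij
    rw [hcancel i j hc]

lemma fV_surjective (hn : n ≠ 0) : Function.Surjective (fV n s) := by
  haveI : NeZero (2*n) := ⟨by omega⟩
  have hcard : Fintype.card (Vt n) = Fintype.card (ZMod (2*n)) := by
    rw [ZMod.card, Fintype.card_prod, Fintype.card_fin, Fintype.card_bool]
    ring
  exact ((Fintype.bijective_iff_injective_and_card _).2 ⟨fV_injective hn, hcard⟩).2

lemma mem_Wnd {a : ZMod (2*n)} {v : Vt n} :
    v ∈ Wnd n p s a ↔ (fV n s v - a).val < 2*p+s := by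
  simp [Wnd]

lemma Wnd_card (h1 : 1 ≤ 2*p+s) (h2 : 2*p+s ≤ n) (a : ZMod (2*n)) :
    (Wnd n p s a).card = 2*p+s := by
  have hn : n ≠ 0 := by omega
  haveI : NeZero (2*n) := ⟨by omega⟩
  have key : (Wnd n p s a).card = (range (2*p+s)).card := by
    apply Finset.card_nbij (i := fun v => (fV n s v - a).val)
    · intro v hv
      rw [Finset.mem_coe, mem_Wnd] at hv
      exact mem_range.mpr hv
    · intro v _ w _ hvw
      simp only at hvw
      have h : fV n s v - a = fV n s w - a := by
        rw [← cast_val_id hn (fV n s v - a), ← cast_val_id hn (fV n s w - a), hvw]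
      exact fV_injective hn (sub_left_inj.1 h)
    · intro t ht
      simp only [coe_range, Set.mem_Iio] at ht
      obtain ⟨v, hv⟩ := fV_surjective (s := s) hn (a + (t : ℕ))
      refine ⟨v, ?_, ?_⟩
      · rw [Finset.mem_coe, mem_Wnd, hv, add_sub_cancel_left,
          ZMod.val_natCast_of_lt (show t < 2*n by omega)]
        exact ht
      · simp only [hv, add_sub_cancel_left, ZMod.val_natCast_of_lt (show t < 2*n by omega)]
  rw [key, Finset.card_range]

lemma dd_even (hs : Even s) : dd s = s + 1 := by unfold dd; rw [if_pos hs]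

lemma dd_oddcase (hs : ¬ Even s) : dd s = s := by unfold dd; rw [if_neg hs]

/-- the key arithmetic: each admissible window spans exactly `p` chords -/
lemma Wnd_edge_card (h1 : 1 ≤ 2*p+s) (h2 : 2*p+s ≤ n) {a : ZMod (2*n)} (ha : a ∈ A0 n s) :
    (univ.filter (fun i : Fin n => (i, false) ∈ Wnd n p s a ∧ (i, true) ∈ Wnd n p s a)).card
      = p := by
  have hn : n ≠ 0 := by omega
  haveI : NeZero (2*n) := ⟨by omega⟩
  have haA : Even s → Even a.val := (mem_A0 hn).1 ha
  have hdd : ¬ Even (dd s) := dd_odd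
  have hdle : dd s ≤ s + 1 := dd_le
  have hddk : dd s % 2 = 1 := by rw [Nat.even_iff] at hdd; omega
  have key : (univ.filter (fun i : Fin n =>
        (i, false) ∈ Wnd n p s a ∧ (i, true) ∈ Wnd n p s a)).card
      = ((range (2*p)).filter (fun x => Even (x + a.val))).card := by
    apply Finset.card_nbij (i := fun i : Fin n => ((((2 * i.val : ℕ) : ZMod (2*n))) - a).val)
    · -- maps to
      intro i hi
      simp only [Finset.mem_coe, mem_filter, mem_univ, true_and, mem_Wnd,
        fV_false, fV_true] at hi
      obtain ⟨c1, c2⟩ := hi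
      set x := ((((2 * i.val : ℕ) : ZMod (2*n))) - a).val with hx
      have hpar : Even (x + a.val) := by
        have h := (val_add_parity hn ((((2 * i.val : ℕ) : ZMod (2*n))) - a) a).1
          (by rw [sub_add_cancel, val_cast_parity hn]; exact ⟨i.val, by ring⟩)
        rwa [← hx] at h
      have hy : ((2 * i.val + dd s : ℕ) : ZMod (2*n)) - a
          = (((x + dd s : ℕ)) : ZMod (2*n)) := by
        have e1 : ((2 * i.val + dd s : ℕ) : ZMod (2*n)) - a
            = ((((2 * i.val : ℕ) : ZMod (2*n))) - a) + ((dd s : ℕ) : ZMod (2*n)) := by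
          push_cast
          ring
        rw [e1, hx, Nat.cast_add, cast_val_id hn]
      rw [hy, ZMod.val_natCast] at c2
      -- wrap elimination
      have hxd : x + dd s < 2*n := by
        by_contra hcon
        push_neg at hcon
        have hEq : x + dd s = 2*n := by omega
        rcases Nat.even_or_odd s with hs | hs
        · have hae := haA hs
          rw [Nat.even_iff] at hae
          rw [Nat.even_iff] at hpar
          omega
        · have hds : dd s = s := dd_oddcase (by rw [Nat.odd_iff] at hs; rw [Nat.even_iff]; omega)
          omega
      rw [Nat.mod_eq_of_lt hxd] at c2
      refine Finset.mem_coe.mpr (mem_filter.mpr ⟨mem_range.mpr ?_, hpar⟩)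
      beta_reduce
      rcases Nat.even_or_odd s with hs | hs
      · have hds := dd_even hs
        omega
      · have hds : dd s = s := dd_oddcase (by rw [Nat.odd_iff] at hs; rw [Nat.even_iff]; omega)
        omega
    · -- injective
      intro i _ j _ hij
      simp only at hij
      have h : (((2 * i.val : ℕ) : ZMod (2*n))) - a = (((2 * j.val : ℕ) : ZMod (2*n))) - a := by
        rw [← cast_val_id hn ((((2 * i.val : ℕ) : ZMod (2*n))) - a),
          ← cast_val_id hn ((((2 * j.val : ℕ) : ZMod (2*n))) - a), hij]
      have h2 := sub_left_inj.1 h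
      have h3 := congrArg ZMod.val h2
      rw [ZMod.val_natCast_of_lt (by omega), ZMod.val_natCast_of_lt (by omega)] at h3
      exact Fin.ext (by omega)
    · -- surjective
      intro x hx
      simp only [Finset.mem_coe, mem_filter, mem_range] at hx
      obtain ⟨hxlt, hxpar⟩ := hx
      have hxN : x < 2*n := by omega
      set c := a + ((x : ℕ) : ZMod (2*n)) with hc
      have hcval : Even c.val := by
        rw [hc, val_add_parity hn, ZMod.val_natCast_of_lt hxN]
        rw [Nat.even_iff] at hxpar ⊢
        omega
      obtain ⟨w, hw⟩ := hcval
      have hwn : c.val = 2 * w := by omega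
      have hwlt : w < n := by
        have := c.val_lt
        omega
      have hcw : ((2 * w : ℕ) : ZMod (2*n)) = c := by
        rw [← hwn, cast_val_id hn]
      have hsub : c - a = ((x : ℕ) : ZMod (2*n)) := by rw [hc]; ring
      have hsubval : (c - a).val = x := by rw [hsub, ZMod.val_natCast_of_lt hxN]
      have hxdk : x + dd s < 2*p+s := by
        rcases Nat.even_or_odd s with hs | hs
        · have hds := dd_even hs
          have hae := haA hs
          rw [Nat.even_iff] at hae
          rw [Nat.even_iff] at hxpar
          omega
        · have hds : dd s = s := dd_oddcase (by rw [Nat.odd_iff] at hs; rw [Nat.even_iff]; omega)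
          omega
      refine ⟨⟨w, hwlt⟩, ?_, ?_⟩
      · refine Finset.mem_coe.mpr (mem_filter.mpr ⟨mem_univ _, ?_, ?_⟩)
        · rw [mem_Wnd, fV_false]
          simp only
          rw [hcw, hsubval]
          omega
        · rw [mem_Wnd, fV_true]
          simp only
          have e1 : ((2 * w + dd s : ℕ) : ZMod (2*n)) - a
              = ((x + dd s : ℕ) : ZMod (2*n)) := by
            have : ((2 * w + dd s : ℕ) : ZMod (2*n))
                = ((2 * w : ℕ) : ZMod (2*n)) + ((dd s : ℕ) : ZMod (2*n)) := by push_cast; ring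
            rw [this, hcw, add_sub_right_comm, hsub]
            push_cast
            ring
          rw [e1, ZMod.val_natCast_of_lt (show x + dd s < 2*n by omega)]
          exact hxdk
      · simp only
        rw [hcw, hsubval]
  rw [key, count_parity]

/-- the windows with admissible starting point belong to the family -/
lemma Wnd_mem_matchFamily (h1 : 1 ≤ 2*p+s) (h2 : 2*p+s ≤ n) {a : ZMod (2*n)}
    (ha : a ∈ A0 n s) : Wnd n p s a ∈ matchFamily n p s := by
  rw [mem_matchFamily_iff]
  exact ⟨Wnd_card h1 h2 a, Wnd_edge_card h1 h2 ha⟩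

lemma sub_val_parity (hn : n ≠ 0) (u w : ZMod (2*n)) :
    ((u - w).val + w.val) % 2 = u.val % 2 := by
  have h := val_add_parity hn (u - w) w
  rw [sub_add_cancel] at h
  rw [Nat.even_iff, Nat.even_iff] at h
  omega

lemma mm_card (c : ZMod (2*n)) :
    ((range (2*p+s)).filter (fun t => Even s → Even (t + c.val))).card = mm p s := by
  by_cases hs : Even s
  · have h2 : 2*p+s = 2*(p + s/2) := by
      rcases hs with ⟨w, hw⟩
      omega
    have hT : (range (2*p+s)).filter (fun t => Even s → Even (t + c.val))
        = (range (2*(p + s/2))).filter (fun t => Even (t + c.val)) := by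
      rw [← h2]
      apply Finset.filter_congr
      intro t _
      simp [hs]
    rw [hT, count_parity]
    unfold mm
    rw [if_pos hs]
  · have hT : (range (2*p+s)).filter (fun t => Even s → Even (t + c.val)) = range (2*p+s) := by
      apply Finset.filter_true_of_mem
      intro t _
      exact fun h => absurd h hs
    rw [hT, Finset.card_range]
    unfold mm
    rw [if_neg hs]

lemma coverage (h1 : 1 ≤ 2*p+s) (h2 : 2*p+s ≤ n) (c : ZMod (2*n)) :
    ((A0 n s).filter (fun a => (c - a).val < 2*p+s)).card = mm p s := by
  have hn : n ≠ 0 := by omega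
  haveI : NeZero (2*n) := ⟨by omega⟩
  have key : ((A0 n s).filter (fun a => (c - a).val < 2*p+s)).card
      = ((range (2*p+s)).filter (fun t => Even s → Even (t + c.val))).card := by
    apply Finset.card_nbij (i := fun a => (c - a).val)
    · intro a ha
      simp only [Finset.mem_coe, mem_filter] at ha
      obtain ⟨haA, hlt⟩ := ha
      refine Finset.mem_coe.mpr (mem_filter.mpr ⟨mem_range.mpr hlt, ?_⟩)
      intro hs
      have hae := (mem_A0 hn).1 haA hs
      have hrel := sub_val_parity hn c a
      rw [Nat.even_iff] at hae ⊢
      beta_reduce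
      omega
    · intro a _ b _ hab
      simp only at hab
      have h : c - a = c - b := by
        rw [← cast_val_id hn (c - a), ← cast_val_id hn (c - b), hab]
      exact sub_right_inj.1 h
    · intro t ht
      simp only [Finset.mem_coe, mem_filter, mem_range] at ht
      obtain ⟨hlt, hpar⟩ := ht
      have htN : t < 2*n := by omega
      have hsub : c - (c - ((t : ℕ) : ZMod (2*n))) = ((t : ℕ) : ZMod (2*n)) := by ring
      refine ⟨c - ((t : ℕ) : ZMod (2*n)), ?_, ?_⟩
      · refine Finset.mem_coe.mpr (mem_filter.mpr ⟨(mem_A0 hn).2 ?_, ?_⟩)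
        · intro hs
          have hc := hpar hs
          have hrel := sub_val_parity hn c ((t : ℕ) : ZMod (2*n))
          rw [ZMod.val_natCast_of_lt htN] at hrel
          rw [Nat.even_iff] at hc ⊢
          omega
        · rw [hsub, ZMod.val_natCast_of_lt htN]
          exact hlt
      · simp only
        rw [hsub, ZMod.val_natCast_of_lt htN]
  rw [key, mm_card]

lemma coverage' (h1 : 1 ≤ 2*p+s) (h2 : 2*p+s ≤ n) (c : ZMod (2*n)) :
    ((A0 n s).filter (fun b => (b - c).val < 2*p+s)).card = mm p s := by
  have hn : n ≠ 0 := by omega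
  haveI : NeZero (2*n) := ⟨by omega⟩
  have key : ((A0 n s).filter (fun b => (b - c).val < 2*p+s)).card
      = ((range (2*p+s)).filter (fun t => Even s → Even (t + c.val))).card := by
    apply Finset.card_nbij (i := fun b => (b - c).val)
    · intro b hb
      simp only [Finset.mem_coe, mem_filter] at hb
      obtain ⟨hbA, hlt⟩ := hb
      refine Finset.mem_coe.mpr (mem_filter.mpr ⟨mem_range.mpr hlt, ?_⟩)
      intro hs
      have hbe := (mem_A0 hn).1 hbA hs
      have hrel := sub_val_parity hn b c
      rw [Nat.even_iff] at hbe ⊢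
      beta_reduce
      omega
    · intro a _ b _ hab
      simp only at hab
      have h : a - c = b - c := by
        rw [← cast_val_id hn (a - c), ← cast_val_id hn (b - c), hab]
      exact sub_left_inj.1 h
    · intro t ht
      simp only [Finset.mem_coe, mem_filter, mem_range] at ht
      obtain ⟨hlt, hpar⟩ := ht
      have htN : t < 2*n := by omega
      have hsub : (c + ((t : ℕ) : ZMod (2*n))) - c = ((t : ℕ) : ZMod (2*n)) := by ring
      refine ⟨c + ((t : ℕ) : ZMod (2*n)), ?_, ?_⟩
      · refine Finset.mem_coe.mpr (mem_filter.mpr ⟨(mem_A0 hn).2 ?_, ?_⟩)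
        · intro hs
          have hc := hpar hs
          have hrel := val_add_parity hn c ((t : ℕ) : ZMod (2*n))
          rw [ZMod.val_natCast_of_lt htN, Nat.even_iff, Nat.even_iff] at hrel
          rw [Nat.even_iff] at hc ⊢
          omega
        · rw [hsub, ZMod.val_natCast_of_lt htN]
          exact hlt
      · simp only
        rw [hsub, ZMod.val_natCast_of_lt htN]
  rw [key, mm_card]

lemma A0_add_k (h1 : 1 ≤ 2*p+s) (h2 : 2*p+s ≤ n) {a : ZMod (2*n)} (ha : a ∈ A0 n s) :
    a + (2*p+s : ℕ) ∈ A0 n s := by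
  have hn : n ≠ 0 := by omega
  haveI : NeZero (2*n) := ⟨by omega⟩
  refine (mem_A0 hn).2 ?_
  intro hs
  have hae := (mem_A0 hn).1 ha hs
  have hrel := val_add_parity hn a ((2*p+s : ℕ) : ZMod (2*n))
  rw [ZMod.val_natCast_of_lt (show 2*p+s < 2*n by omega), Nat.even_iff, Nat.even_iff] at hrel
  rcases hs with ⟨w, hw⟩
  rw [Nat.even_iff] at hae ⊢
  omega

lemma wnd_offsets (h1 : 1 ≤ 2*p+s) (h2 : 2*p+s ≤ n) {e : Equiv.Perm (Vt n)}
    {a b : ZMod (2*n)}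
    (hne : (((Wnd n p s a).map e.toEmbedding) ∩ ((Wnd n p s b).map e.toEmbedding)).Nonempty) :
    (a - b).val < 2*p+s ∨ (b - a).val < 2*p+s := by
  have hn : n ≠ 0 := by omega
  haveI : NeZero (2*n) := ⟨by omega⟩
  obtain ⟨v, hv⟩ := hne
  rw [Finset.mem_inter, mem_map_equiv', mem_map_equiv', mem_Wnd, mem_Wnd] at hv
  set z := fV n s (e.symm v) with hz
  obtain ⟨t1, t2⟩ := hv
  rcases le_or_gt ((z - b).val) ((z - a).val) with hle | hlt
  · right
    have hba : b - a = (((z - a).val - (z - b).val : ℕ) : ZMod (2*n)) := by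
      rw [Nat.cast_sub hle, cast_val_id hn, cast_val_id hn]
      ring
    rw [hba, ZMod.val_natCast_of_lt (by omega)]
    omega
  · left
    have hab : a - b = (((z - b).val - (z - a).val : ℕ) : ZMod (2*n)) := by
      rw [Nat.cast_sub (le_of_lt hlt), cast_val_id hn, cast_val_id hn]
      ring
    rw [hab, ZMod.val_natCast_of_lt (by omega)]
    omega

lemma wnd_disj (h1 : 1 ≤ 2*p+s) (h2 : 2*p+s ≤ n) (e : Equiv.Perm (Vt n)) (a : ZMod (2*n)) :
    ((Wnd n p s a).map e.toEmbedding) ∩ ((Wnd n p s (a + (2*p+s : ℕ))).map e.toEmbedding)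
      = ∅ := by
  have hn : n ≠ 0 := by omega
  haveI : NeZero (2*n) := ⟨by omega⟩
  rw [Finset.eq_empty_iff_forall_notMem]
  intro v hv
  rw [Finset.mem_inter, mem_map_equiv', mem_map_equiv', mem_Wnd, mem_Wnd] at hv
  set z := fV n s (e.symm v) with hz
  obtain ⟨t1, t2⟩ := hv
  have hrw : z - a = (((z - (a + (2*p+s : ℕ))).val + (2*p+s) : ℕ) : ZMod (2*n)) := by
    push_cast
    rw [cast_val_id hn]
    ring
  have hval : (z - a).val = (z - (a + (2*p+s : ℕ))).val + (2*p+s) := by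
    rw [hrw, ZMod.val_natCast_of_lt (by omega)]
  omega

/-- Katona-type bound for one configuration -/
lemma katona_row (h1 : 1 ≤ 2*p+s) (h2 : 2*p+s ≤ n) (F : Finset (Finset (Vt n)))
    (hint : IsIntersecting F) (e : Equiv.Perm (Vt n)) :
    ((A0 n s).filter (fun a => (Wnd n p s a).map e.toEmbedding ∈ F)).card ≤ mm p s := by
  classical
  have hn : n ≠ 0 := by omega
  haveI : NeZero (2*n) := ⟨by omega⟩
  rcases Finset.eq_empty_or_nonempty
    ((A0 n s).filter (fun a => (Wnd n p s a).map e.toEmbedding ∈ F)) with he0 | ⟨a0, ha0⟩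
  · rw [he0]
    simp
  · obtain ⟨ha0A, ha0F⟩ := mem_filter.1 ha0
    have hB := coverage' h1 h2 a0
    rw [← hB]
    apply Finset.card_le_card_of_injOn
      (f := fun a => if (a - a0).val < 2*p+s then a else a + ((2*p+s : ℕ) : ZMod (2*n)))
    · intro a ha
      obtain ⟨haA, haF⟩ := mem_filter.1 ha
      beta_reduce
      by_cases hcase : (a - a0).val < 2*p+s
      · rw [if_pos hcase]
        exact mem_filter.2 ⟨haA, hcase⟩
      · rw [if_neg hcase]
        have hoff := wnd_offsets h1 h2 (hint _ haF _ ha0F)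
        have hu : (a0 - a).val < 2*p+s := hoff.resolve_left hcase
        have hune : (a0 - a).val ≠ 0 := by
          intro h0
          have hz : a0 - a = 0 := by
            have hh := cast_val_id hn (a0 - a)
            rw [h0] at hh
            simpa using hh.symm
          have heq : a = a0 := (sub_eq_zero.mp hz).symm
          exact hcase (by rw [heq, sub_self, ZMod.val_zero]; omega)
        have hval : (a + ((2*p+s : ℕ) : ZMod (2*n)) - a0).val = 2*p+s - (a0 - a).val := by
          have he1 : a + ((2*p+s : ℕ) : ZMod (2*n)) - a0
              = ((2*p+s - (a0 - a).val : ℕ) : ZMod (2*n)) := by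
            rw [Nat.cast_sub (le_of_lt hu), cast_val_id hn]
            ring
          rw [he1, ZMod.val_natCast_of_lt (by omega)]
        refine mem_filter.2 ⟨A0_add_k h1 h2 haA, ?_⟩
        rw [hval]
        omega
    · intro aa haa bb hbb hfab
      simp only [Finset.mem_coe, mem_filter] at haa hbb
      simp only at hfab
      by_cases h1a : (aa - a0).val < 2*p+s <;> by_cases h1b : (bb - a0).val < 2*p+s
      · rwa [if_pos h1a, if_pos h1b] at hfab
      · rw [if_pos h1a, if_neg h1b] at hfab
        exfalso
        have hnonempty := hint _ hbb.2 _ haa.2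
        rw [hfab] at hnonempty
        rw [wnd_disj h1 h2 e bb] at hnonempty
        exact Finset.not_nonempty_empty hnonempty
      · rw [if_neg h1a, if_pos h1b] at hfab
        exfalso
        have hnonempty := hint _ haa.2 _ hbb.2
        rw [← hfab] at hnonempty
        rw [wnd_disj h1 h2 e aa] at hnonempty
        exact Finset.not_nonempty_empty hnonempty
      · rw [if_neg h1a, if_neg h1b] at hfab
        exact add_right_cancel hfab

lemma map_symm_map {H : Finset (Vt n)} {e : Equiv.Perm (Vt n)} :
    (H.map e.toEmbedding).map e.symm.toEmbedding = H := by
  ext v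
  rw [mem_map_equiv', Equiv.symm_symm, mem_map_equiv', Equiv.symm_apply_apply]

lemma cnt_eq_stab (h1 : 1 ≤ 2*p+s) (h2 : 2*p+s ≤ n) {a : ZMod (2*n)} (ha : a ∈ A0 n s)
    {H : Finset (Vt n)} (hH : H ∈ matchFamily n p s) :
    ((Gs n).filter (fun e => (Wnd n p s a).map e.toEmbedding = H)).card = stab n p s a := by
  classical
  obtain ⟨e0, he0G, he0⟩ := trans_matchFamily (Wnd_mem_matchFamily h1 h2 ha) hH
  unfold stab
  apply Finset.card_nbij' (i := fun e => e.trans e0.symm) (j := fun e => e.trans e0)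
  · intro e he
    obtain ⟨heG, heq⟩ := mem_filter.1 he
    refine mem_filter.2 ⟨trans_mem_Gs heG (symm_mem_Gs he0G), ?_⟩
    rw [map_trans, heq, ← he0, map_symm_map]
  · intro e he
    obtain ⟨heG, heq⟩ := mem_filter.1 he
    refine mem_filter.2 ⟨trans_mem_Gs heG he0G, ?_⟩
    rw [map_trans, heq, he0]
  · intro e _
    apply Equiv.ext
    intro v
    simp [Equiv.trans_apply]
  · intro e _
    apply Equiv.ext
    intro v
    simp [Equiv.trans_apply]

lemma card_filter_map_mem (h1 : 1 ≤ 2*p+s) (h2 : 2*p+s ≤ n) {a : ZMod (2*n)} (ha : a ∈ A0 n s)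
    {F : Finset (Finset (Vt n))} (hF : F ⊆ matchFamily n p s) :
    ((Gs n).filter (fun e => (Wnd n p s a).map e.toEmbedding ∈ F)).card
      = F.card * stab n p s a := by
  classical
  have hfib := Finset.card_eq_sum_card_fiberwise
    (f := fun e => (Wnd n p s a).map e.toEmbedding)
    (s := (Gs n).filter (fun e => (Wnd n p s a).map e.toEmbedding ∈ F))
    (t := F) (fun e he => (mem_filter.1 he).2)
  rw [hfib]
  have hterm : ∀ H ∈ F,
      ((((Gs n).filter (fun e => (Wnd n p s a).map e.toEmbedding ∈ F))).filter
        (fun e => (Wnd n p s a).map e.toEmbedding = H)).card = stab n p s a := by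
    intro H hH
    rw [Finset.filter_filter]
    have heq : (Gs n).filter
        (fun e => (Wnd n p s a).map e.toEmbedding ∈ F ∧ (Wnd n p s a).map e.toEmbedding = H)
        = (Gs n).filter (fun e => (Wnd n p s a).map e.toEmbedding = H) := by
      apply Finset.filter_congr
      intro e _
      constructor
      · exact fun h => h.2
      · intro h
        exact ⟨by rw [h]; exact hH, h⟩
    rw [heq]
    exact cnt_eq_stab h1 h2 ha (hF hH)
  rw [Finset.sum_congr rfl hterm, Finset.sum_const, smul_eq_mul]

lemma star_row (h1 : 1 ≤ 2*p+s) (h2 : 2*p+s ≤ n) (v0 : Vt n) (e : Equiv.Perm (Vt n)) :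
    ((A0 n s).filter (fun a => v0 ∈ (Wnd n p s a).map e.toEmbedding)).card = mm p s := by
  have hrw : (A0 n s).filter (fun a => v0 ∈ (Wnd n p s a).map e.toEmbedding)
      = (A0 n s).filter (fun a => (fV n s (e.symm v0) - a).val < 2*p+s) := by
    apply Finset.filter_congr
    intro a _
    rw [mem_map_equiv', mem_Wnd]
  rw [hrw]
  exact coverage h1 h2 _

lemma sum_card_swap {α β : Type*} [DecidableEq α] [DecidableEq β] (A : Finset α) (B : Finset β)
    (P : α → β → Prop) [∀ x y, Decidable (P x y)] :
    (∑ x ∈ A, (B.filter (fun y => P x y)).card) = ∑ y ∈ B, (A.filter (fun x => P x y)).card := by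
  simp only [Finset.card_filter]
  exact Finset.sum_comm

lemma main_aux (h1 : 1 ≤ 2*p+s) (h2 : 2*p+s ≤ n) (v0 : Vt n)
    (F : Finset (Finset (Vt n))) (hF : F ⊆ matchFamily n p s) (hint : IsIntersecting F) :
    F.card ≤ ((matchFamily n p s).filter (fun H => v0 ∈ H)).card := by
  classical
  have hn : n ≠ 0 := by omega
  haveI : NeZero (2*n) := ⟨by omega⟩
  set star := (matchFamily n p s).filter (fun H => v0 ∈ H) with hstar
  have hstarsub : star ⊆ matchFamily n p s := Finset.filter_subset _ _
  have colF : ∀ a ∈ A0 n s,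
      ((Gs n).filter (fun e => (Wnd n p s a).map e.toEmbedding ∈ F)).card
        = F.card * stab n p s a :=
    fun a ha => card_filter_map_mem h1 h2 ha hF
  have colS : ∀ a ∈ A0 n s,
      ((Gs n).filter (fun e => v0 ∈ (Wnd n p s a).map e.toEmbedding)).card
        = star.card * stab n p s a := by
    intro a ha
    have hrw : (Gs n).filter (fun e => v0 ∈ (Wnd n p s a).map e.toEmbedding)
        = (Gs n).filter (fun e => (Wnd n p s a).map e.toEmbedding ∈ star) := by
      apply Finset.filter_congr
      intro e heG
      rw [hstar, mem_filter]
      constructor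
      · intro hv
        exact ⟨map_mem_matchFamily heG (Wnd_mem_matchFamily h1 h2 ha), hv⟩
      · exact fun h => h.2
    rw [hrw]
    exact card_filter_map_mem h1 h2 ha hstarsub
  have swapF := sum_card_swap (Gs n) (A0 n s)
    (fun e a => (Wnd n p s a).map e.toEmbedding ∈ F)
  have swapS := sum_card_swap (Gs n) (A0 n s)
    (fun e a => v0 ∈ (Wnd n p s a).map e.toEmbedding)
  set Wt := ∑ a ∈ A0 n s, stab n p s a with hWt
  have hchain : F.card * Wt ≤ star.card * Wt := by
    calc F.card * Wt = ∑ a ∈ A0 n s, F.card * stab n p s a := by rw [hWt, Finset.mul_sum]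
      _ = ∑ a ∈ A0 n s,
          ((Gs n).filter (fun e => (Wnd n p s a).map e.toEmbedding ∈ F)).card :=
        Finset.sum_congr rfl (fun a ha => (colF a ha).symm)
      _ = ∑ e ∈ Gs n,
          ((A0 n s).filter (fun a => (Wnd n p s a).map e.toEmbedding ∈ F)).card := swapF.symm
      _ ≤ ∑ e ∈ Gs n, mm p s :=
        Finset.sum_le_sum (fun e _ => katona_row h1 h2 F hint e)
      _ = ∑ e ∈ Gs n,
          ((A0 n s).filter (fun a => v0 ∈ (Wnd n p s a).map e.toEmbedding)).card :=
        Finset.sum_congr rfl (fun e _ => (star_row h1 h2 v0 e).symm)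
      _ = ∑ a ∈ A0 n s,
          ((Gs n).filter (fun e => v0 ∈ (Wnd n p s a).map e.toEmbedding)).card := swapS
      _ = ∑ a ∈ A0 n s, star.card * stab n p s a := Finset.sum_congr rfl colS
      _ = star.card * Wt := by rw [hWt, Finset.mul_sum]
  have h0A : (0 : ZMod (2*n)) ∈ A0 n s := by
    refine (mem_A0 hn).2 (fun _ => ?_)
    rw [ZMod.val_zero]
    exact Even.zero
  have hstab0 : 1 ≤ stab n p s 0 := by
    rw [Nat.succ_le_iff]
    apply Finset.card_pos.2
    refine ⟨Equiv.refl _, mem_filter.2 ⟨refl_mem_Gs, ?_⟩⟩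
    ext v
    rw [mem_map_equiv']
    rfl
  have hWtpos : 0 < Wt :=
    lt_of_lt_of_le hstab0 (Finset.single_le_sum (fun a _ => Nat.zero_le _) h0A)
  exact Nat.le_of_mul_le_mul_right hchain hWtpos

end MFaux

/-- For `1 ≤ 2p+s ≤ n`, the family `H^{(p,s)}(n)` is EKR: every intersecting
subfamily has size at most the size of the star centered at the vertex `(0, false)`. -/
theorem matchFamily_EKR (n p s : ℕ) (h1 : 1 ≤ 2 * p + s) (h2 : 2 * p + s ≤ n)
    (F : Finset (Finset (Fin n × Bool))) (hF : F ⊆ matchFamily n p s)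
    (hint : IsIntersecting F) :
    F.card ≤ ((matchFamily n p s).filter
      (fun H => ((⟨0, by omega⟩ : Fin n), false) ∈ H)).card := by
  exact MFaux.main_aux h1 h2 _ F hF hint
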